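/- arXiv:2309.05795 — 4 statements merged into one kernel-verified Lean document; each statement's English description precedes it below -/
import Mathlib

section
/- With the setup of the k-SAT reduction (W ∈ ℝ^{m×n} encoding clause/literal signs, b = (-(k-1))·1 ∈ ℝ^m, second layer W₂ = 1ᵀ ∈ ℝ^{1×m}, b₂ = 0), the two-layer ReLU network G₂(z) = ReLU(W₂ · ReLU(W z + b) + b₂) satisfies: there exists z ∈ {-1,1}^n with G₂(z) = 0 if and only if the k-CNF formula φ is satisfiable. -/
/-- Two-layer ReLU network from the k-SAT reduction: `W` is the clause/literal sign
matrix, `b = -(k-1)·1`, the second layer sums all coordinates (weights all `1`,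
bias `0`).  There is a `z ∈ {-1,1}^n` with `G₂(z) = 0` iff the k-CNF formula is
satisfiable, where clause `j` is satisfied by assignment `z` iff
`∃ i, W j i * z i = -1`. -/
theorem stmt_6 (m n k : ℕ) (hk : 1 ≤ k)
    (W : Matrix (Fin m) (Fin n) ℝ)
    (hW : ∀ j i, W j i = -1 ∨ W j i = 0 ∨ W j i = 1)
    (hrow : ∀ j, (Finset.univ.filter (fun i => W j i ≠ 0)).card = k) :
    (∃ z : Fin n → ℝ, (∀ i, z i = -1 ∨ z i = 1) ∧
        max ((∑ j, max (∑ i, W j i * z i + (-((k : ℝ) - 1))) 0) + 0) 0 = 0) ↔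
      (∃ z : Fin n → ℝ, (∀ i, z i = -1 ∨ z i = 1) ∧ ∀ j, ∃ i, W j i * z i = -1) := by
  have key : ∀ (z : Fin n → ℝ), (∀ i, z i = -1 ∨ z i = 1) → ∀ j,
      (∑ i, W j i * z i ≤ (k : ℝ) - 1 ↔ ∃ i, W j i * z i = -1) := by
    intro z hz j
    have hfilter : ∑ i ∈ Finset.univ.filter (fun i => W j i ≠ 0), W j i * z i
        = ∑ i, W j i * z i := by
      apply Finset.sum_filter_of_ne
      intro i _ hne hW0
      exact hne (by rw [hW0, zero_mul])
    constructor
    · intro hle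
      by_contra hno
      push_neg at hno
      have hall : ∀ i ∈ Finset.univ.filter (fun i => W j i ≠ 0), W j i * z i = 1 := by
        intro i hi
        simp only [Finset.mem_filter] at hi
        rcases hW j i with h | h | h
        · rcases hz i with h' | h' <;> rw [h, h']
          · norm_num
          · exact absurd (by rw [h, h']; norm_num) (hno i)
        · exact absurd h hi.2
        · rcases hz i with h' | h' <;> rw [h, h']
          · exact absurd (by rw [h, h']; norm_num) (hno i)
          · norm_num
      have hsum : ∑ i, W j i * z i = (k : ℝ) := by
        rw [← hfilter, Finset.sum_congr rfl hall, Finset.sum_const, hrow j]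
        simp
      rw [hsum] at hle
      have : (1 : ℝ) ≤ (k : ℝ) := by exact_mod_cast hk
      linarith
    · rintro ⟨i₀, hi₀⟩
      have hi₀mem : i₀ ∈ Finset.univ.filter (fun i => W j i ≠ 0) := by
        simp only [Finset.mem_filter, Finset.mem_univ, true_and]
        intro h0
        rw [h0, zero_mul] at hi₀
        norm_num at hi₀
      have hbound : ∀ i ∈ (Finset.univ.filter (fun i => W j i ≠ 0)).erase i₀,
          W j i * z i ≤ 1 := by
        intro i _
        rcases hW j i with h | h | h <;> rcases hz i with h' | h' <;>
          rw [h, h'] <;> norm_num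
      have h1 : ∑ i ∈ (Finset.univ.filter (fun i => W j i ≠ 0)).erase i₀, W j i * z i
          ≤ ((Finset.univ.filter (fun i => W j i ≠ 0)).erase i₀).card • (1 : ℝ) :=
        Finset.sum_le_card_nsmul _ _ _ hbound
      have hcard : ((Finset.univ.filter (fun i => W j i ≠ 0)).erase i₀).card = k - 1 := by
        rw [Finset.card_erase_of_mem hi₀mem, hrow j]
      rw [← hfilter, ← Finset.add_sum_erase _ _ hi₀mem, hi₀]
      have hk1 : ((k - 1 : ℕ) : ℝ) = (k : ℝ) - 1 := by
        have : (1 : ℕ) ≤ k := hk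
        push_cast [this]
        ring
      rw [hcard] at h1
      simp only [nsmul_eq_mul, mul_one] at h1
      rw [hk1] at h1
      linarith
  constructor
  · rintro ⟨z, hz, hG⟩
    refine ⟨z, hz, fun j => ?_⟩
    have hnn : ∀ j ∈ (Finset.univ : Finset (Fin m)),
        (0:ℝ) ≤ max (∑ i, W j i * z i + (-((k : ℝ) - 1))) 0 := fun j _ => le_max_right _ _
    have hsum : ∑ j, max (∑ i, W j i * z i + (-((k : ℝ) - 1))) 0 = 0 := by
      have h1 := Finset.sum_nonneg hnn
      have h2 : (∑ j, max (∑ i, W j i * z i + (-((k : ℝ) - 1))) 0) + 0 ≤ 0 :=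
        calc (∑ j, max (∑ i, W j i * z i + (-((k : ℝ) - 1))) 0) + 0
            ≤ max ((∑ j, max (∑ i, W j i * z i + (-((k : ℝ) - 1))) 0) + 0) 0 :=
              le_max_left _ _
          _ = 0 := hG
      linarith
    have hj : max (∑ i, W j i * z i + (-((k : ℝ) - 1))) 0 = 0 :=
      (Finset.sum_eq_zero_iff_of_nonneg hnn).mp hsum j (Finset.mem_univ j)
    have hle : ∑ i, W j i * z i ≤ (k : ℝ) - 1 := by
      have : ∑ i, W j i * z i + (-((k : ℝ) - 1)) ≤ 0 := hj ▸ le_max_left _ _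
      linarith
    exact (key z hz j).mp hle
  · rintro ⟨z, hz, hsat⟩
    refine ⟨z, hz, ?_⟩
    have hzero : ∀ j ∈ (Finset.univ : Finset (Fin m)),
        max (∑ i, W j i * z i + (-((k : ℝ) - 1))) 0 = 0 := by
      intro j _
      have hle := (key z hz j).mpr (hsat j)
      exact max_eq_right (by linarith)
    rw [Finset.sum_eq_zero hzero]
    norm_num
end

section
/- In the CVP-reduction construction (W₁, b₁ as above with parameter α), if z ∈ {0,1}^{2n} satisfies ‖W₁ z + b₁‖_p < δ and α > δ > 0, then for every index i ∈ [n], exactly one of z_{2i-1}, z_{2i} equals 1; consequently, setting y_i = z_{2i-1} gives y ∈ {0,1}^n with ‖B y - t‖_p < δ. -/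
/-- CVP reduction, backward direction: any binary `z` with small `ℓ_p` residual has
exactly one of `z (i,0)`, `z (i,1)` equal to `1` for every `i`, and the induced
`y i = z (i,0)` is a close lattice coefficient vector. -/
theorem stmt_10 (d n : ℕ) (B : Matrix (Fin d) (Fin n) ℝ) (t : Fin d → ℝ)
    (α δ p : ℝ) (hδ : 0 < δ) (hαδ : δ < α) (hp : 1 ≤ p)
    (W₁ : Matrix (Fin d ⊕ Fin n) (Fin n × Fin 2) ℝ)
    (hW : W₁ = fun r c =>
      match r with
      | Sum.inl j => if c.2 = 0 then B j c.1 else 0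
      | Sum.inr i => if i = c.1 then α else 0)
    (b₁ : Fin d ⊕ Fin n → ℝ)
    (hb : b₁ = Sum.elim (fun j => -t j) (fun _ => -α))
    (z : Fin n × Fin 2 → ℝ) (hz : ∀ c, z c = 0 ∨ z c = 1)
    (h : (∑ r, |(W₁.mulVec z + b₁) r| ^ p) ^ (1/p) < δ) :
    (∀ i : Fin n, (z (i, 0) = 1 ∧ z (i, 1) = 0) ∨ (z (i, 0) = 0 ∧ z (i, 1) = 1)) ∧
      (∑ j, |B.mulVec (fun i => z (i, 0)) j - t j| ^ p) ^ (1/p) < δ := by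
  have hp0 : 0 < p := lt_of_lt_of_le one_pos hp
  have hα : 0 < α := hδ.trans hαδ
  have hinl : ∀ j, (W₁.mulVec z + b₁) (Sum.inl j)
      = B.mulVec (fun i => z (i, 0)) j - t j := by
    intro j
    simp [hW, hb, Matrix.mulVec, dotProduct, Fintype.sum_prod_type,
      Fin.sum_univ_two, sub_eq_add_neg]
  have hinr : ∀ i, (W₁.mulVec z + b₁) (Sum.inr i)
      = α * (z (i, 0) + z (i, 1)) - α := by
    intro i
    simp [hW, hb, Matrix.mulVec, dotProduct, Fintype.sum_prod_type,
      Fin.sum_univ_two, ite_mul, Finset.sum_add_distrib, Finset.sum_ite_eq,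
      mul_add, sub_eq_add_neg]
  set S : ℝ := ∑ r, |(W₁.mulVec z + b₁) r| ^ p with hS
  have hSnn : 0 ≤ S := Finset.sum_nonneg fun r _ => Real.rpow_nonneg (abs_nonneg _) p
  have hSlt : S < δ ^ p := by
    have := Real.rpow_lt_rpow (Real.rpow_nonneg hSnn _) h hp0
    rwa [← Real.rpow_mul hSnn, one_div_mul_cancel (ne_of_gt hp0),
      Real.rpow_one] at this
  have hterm : ∀ r, |(W₁.mulVec z + b₁) r| ^ p ≤ S := by
    intro r
    exact Finset.single_le_sum (f := fun r => |(W₁.mulVec z + b₁) r| ^ p)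
      (fun r _ => Real.rpow_nonneg (abs_nonneg _) p) (Finset.mem_univ r)
  have hone : ∀ i : Fin n, z (i, 0) + z (i, 1) = 1 := by
    intro i
    by_contra hcon
    have h1 : |(W₁.mulVec z + b₁) (Sum.inr i)| = α := by
      rw [hinr]
      rcases hz (i, 0) with h0 | h0 <;> rcases hz (i, 1) with h1 | h1
      · have he : α * (z (i, 0) + z (i, 1)) - α = -α := by rw [h0, h1]; ring
        rw [he, abs_neg, abs_of_pos hα]
      · exact absurd (by rw [h0, h1]; norm_num) hcon
      · exact absurd (by rw [h0, h1]; norm_num) hcon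
      · have he : α * (z (i, 0) + z (i, 1)) - α = α := by rw [h0, h1]; ring
        rw [he, abs_of_pos hα]
    have h2 : α ^ p ≤ S := h1 ▸ hterm (Sum.inr i)
    have h3 : δ ^ p < α ^ p := Real.rpow_lt_rpow hδ.le hαδ hp0
    linarith [h2.trans_lt hSlt]
  constructor
  · intro i
    rcases hz (i, 0) with h0 | h0 <;> rcases hz (i, 1) with h1 | h1
    · exfalso; have := hone i; rw [h0, h1] at this; norm_num at this
    · right; exact ⟨h0, h1⟩
    · left; exact ⟨h0, h1⟩
    · exfalso; have := hone i; rw [h0, h1] at this; norm_num at this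
  · have hT : (∑ j, |B.mulVec (fun i => z (i, 0)) j - t j| ^ p) ≤ S := by
      rw [hS, Fintype.sum_sum_type]
      have : ∑ j, |B.mulVec (fun i => z (i, 0)) j - t j| ^ p
          = ∑ j, |(W₁.mulVec z + b₁) (Sum.inl j)| ^ p := by
        apply Finset.sum_congr rfl; intro j _; rw [hinl]
      rw [this]
      exact le_add_of_nonneg_right (Finset.sum_nonneg fun r _ =>
        Real.rpow_nonneg (abs_nonneg _) p)
    have hTnn : 0 ≤ ∑ j, |B.mulVec (fun i => z (i, 0)) j - t j| ^ p :=
      Finset.sum_nonneg fun r _ => Real.rpow_nonneg (abs_nonneg _) p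
    have hlt : (∑ j, |B.mulVec (fun i => z (i, 0)) j - t j| ^ p) < δ ^ p :=
      lt_of_le_of_lt hT hSlt
    have := Real.rpow_lt_rpow hTnn hlt (by positivity : (0:ℝ) < 1/p)
    rwa [← Real.rpow_mul hδ.le, mul_one_div_cancel (ne_of_gt hp0),
      Real.rpow_one] at this
end

section
/- Let G = (V,E) be a graph on n vertices (n even) with positive edge weights w, let p be a positive even integer, and let α, β, M be parameters. Define W ∈ ℝ^{(C(n,2)+1)×n} and b as in the half-clique reduction: for each pair e = {i,j}, row e of W has value 2·w_e^{1/p} at columns i and j if e ∈ E (and 2α if e ∉ E), zeros elsewhere, with b_e = -w_e^{1/p} (resp. -α); the last row of W equals β·1 and b_{last} = -(n/2)β. If S ⊆ V is a clique of size n/2 with ∑_{e ⊆ S} w_e < M and z is its indicator vector, then ‖W z + b‖_p^p = (3^p - 1)·∑_{e ⊆ S, e ∈ E} w_e + α^p·Z + ∑_{e ∈ E} w_e < (3^p-1)M + α^p Z + ∑_{e∈E} w_e, where Z is the number of non-edges of G. -/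
/-- The output `W z + b` of the half-clique reduction network, with rows indexed by
unordered vertex pairs (coded as ordered pairs with `e.1 < e.2`) plus one extra row.
For a pair `e`, the row value on `z` is `2 c_e (z_{e.1} + z_{e.2}) - c_e` with
`c_e = w_e^{1/p}` for edges and `c_e = α` for non-edges; the extra row gives
`β ∑ᵢ zᵢ - (n/2) β`. -/
noncomputable def halfCliqueOut (n : ℕ) (G : SimpleGraph (Fin n)) [DecidableRel G.Adj]
    (w : Fin n → Fin n → ℝ) (p : ℕ) (α β : ℝ) (z : Fin n → ℝ) :
    ({e : Fin n × Fin n // e.1 < e.2} ⊕ Unit) → ℝ :=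
  Sum.elim
    (fun e =>
      2 * (if G.Adj e.val.1 e.val.2 then w e.val.1 e.val.2 ^ ((1 : ℝ) / p) else α) *
          (z e.val.1 + z e.val.2) -
        (if G.Adj e.val.1 e.val.2 then w e.val.1 e.val.2 ^ ((1 : ℝ) / p) else α))
    (fun _ => β * (∑ i, z i) - ((n / 2 : ℕ) : ℝ) * β)

theorem stmt_12 (n : ℕ) (hn : 2 ∣ n) (G : SimpleGraph (Fin n)) [DecidableRel G.Adj]
    (w : Fin n → Fin n → ℝ) (hw : ∀ i j, G.Adj i j → 0 < w i j)
    (hwsymm : ∀ i j, w i j = w j i)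
    (p : ℕ) (hp : Even p) (hp0 : 0 < p) (α β M : ℝ) (Z : ℕ)
    (hZ : Z = (Finset.univ.filter
      (fun e : {e : Fin n × Fin n // e.1 < e.2} => ¬ G.Adj e.val.1 e.val.2)).card)
    (S : Finset (Fin n))
    (hclique : ∀ i ∈ S, ∀ j ∈ S, i ≠ j → G.Adj i j)
    (hcard : S.card = n / 2)
    (hM : (∑ e : {e : Fin n × Fin n // e.1 < e.2},
        if G.Adj e.val.1 e.val.2 ∧ e.val.1 ∈ S ∧ e.val.2 ∈ S
          then w e.val.1 e.val.2 else 0) < M) :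
    let z : Fin n → ℝ := fun i => if i ∈ S then 1 else 0
    (∑ r, |halfCliqueOut n G w p α β z r| ^ p) =
        ((3 : ℝ) ^ p - 1) * (∑ e : {e : Fin n × Fin n // e.1 < e.2},
            if G.Adj e.val.1 e.val.2 ∧ e.val.1 ∈ S ∧ e.val.2 ∈ S
              then w e.val.1 e.val.2 else 0) +
          α ^ p * Z +
          (∑ e : {e : Fin n × Fin n // e.1 < e.2},
            if G.Adj e.val.1 e.val.2 then w e.val.1 e.val.2 else 0) ∧
      (∑ r, |halfCliqueOut n G w p α β z r| ^ p) <
        ((3 : ℝ) ^ p - 1) * M + α ^ p * Z +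
          (∑ e : {e : Fin n × Fin n // e.1 < e.2},
            if G.Adj e.val.1 e.val.2 then w e.val.1 e.val.2 else 0) := by

  intro z
  have hppos : (p : ℝ) ≠ 0 := Nat.cast_ne_zero.mpr hp0.ne'
  -- the extra row vanishes
  have hzsum : (∑ i, z i) = ((n / 2 : ℕ) : ℝ) := by
    simp only [z, Finset.sum_boole, Finset.filter_mem_eq_inter, Finset.univ_inter, hcard]
  have hlast : |halfCliqueOut n G w p α β z (Sum.inr ())| ^ p = 0 := by
    simp [halfCliqueOut, hzsum, mul_comm, zero_pow hp0.ne']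
  -- per-row computation for pair rows
  have hrow : ∀ e : {e : Fin n × Fin n // e.1 < e.2},
      |halfCliqueOut n G w p α β z (Sum.inl e)| ^ p =
        ((3 : ℝ) ^ p - 1) * (if G.Adj e.val.1 e.val.2 ∧ e.val.1 ∈ S ∧ e.val.2 ∈ S
            then w e.val.1 e.val.2 else 0) +
          α ^ p * (if ¬ G.Adj e.val.1 e.val.2 then 1 else 0) +
          (if G.Adj e.val.1 e.val.2 then w e.val.1 e.val.2 else 0) := by
    intro e
    have hne : e.val.1 ≠ e.val.2 := ne_of_lt e.prop
    have habs : ∀ x : ℝ, |x| ^ p = x ^ p := fun x => hp.pow_abs x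
    have hcpow : G.Adj e.val.1 e.val.2 →
        (w e.val.1 e.val.2 ^ ((1 : ℝ) / p)) ^ p = w e.val.1 e.val.2 := by
      intro ha
      have hwpos := hw _ _ ha
      rw [← Real.rpow_natCast (w e.val.1 e.val.2 ^ ((1 : ℝ) / p)) p,
        ← Real.rpow_mul hwpos.le, one_div_mul_cancel hppos, Real.rpow_one]
    by_cases h1 : e.val.1 ∈ S <;> by_cases h2 : e.val.2 ∈ S
    · have ha : G.Adj e.val.1 e.val.2 := hclique _ h1 _ h2 hne
      simp only [halfCliqueOut, Sum.elim_inl, z, if_pos h1, if_pos h2, if_pos ha, ha,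
        not_true, if_neg, h1, h2, and_self, if_true]
      rw [habs]
      have : 2 * w e.val.1 e.val.2 ^ ((1 : ℝ) / p) * (1 + 1) -
          w e.val.1 e.val.2 ^ ((1 : ℝ) / p) = 3 * w e.val.1 e.val.2 ^ ((1 : ℝ) / p) := by
        ring
      rw [this, mul_pow, hcpow ha]
      simp [h1, h2]
      ring
    · by_cases ha : G.Adj e.val.1 e.val.2 <;>
      · simp only [halfCliqueOut, Sum.elim_inl, z, if_pos h1, if_neg h2, ha, if_true,
          if_false, and_false, false_and, and_true, not_true, not_false_iff]
        rw [habs]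
        first
        | (have : 2 * w e.val.1 e.val.2 ^ ((1 : ℝ) / p) * (1 + 0) -
              w e.val.1 e.val.2 ^ ((1 : ℝ) / p) = w e.val.1 e.val.2 ^ ((1 : ℝ) / p) := by ring
           rw [this, hcpow ha]; simp [h1, h2]; try ring)
        | (have : 2 * α * (1 + 0) - α = α := by ring
           rw [this]; simp [h1, h2]; try ring)
    · by_cases ha : G.Adj e.val.1 e.val.2 <;>
      · simp only [halfCliqueOut, Sum.elim_inl, z, if_neg h1, if_pos h2, ha, if_true,
          if_false, and_false, false_and, and_true, not_true, not_false_iff]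
        rw [habs]
        first
        | (have : 2 * w e.val.1 e.val.2 ^ ((1 : ℝ) / p) * (0 + 1) -
              w e.val.1 e.val.2 ^ ((1 : ℝ) / p) = w e.val.1 e.val.2 ^ ((1 : ℝ) / p) := by ring
           rw [this, hcpow ha]; simp [h1, h2]; try ring)
        | (have : 2 * α * (0 + 1) - α = α := by ring
           rw [this]; simp [h1, h2]; try ring)
    · by_cases ha : G.Adj e.val.1 e.val.2 <;>
      · simp only [halfCliqueOut, Sum.elim_inl, z, if_neg h1, if_neg h2, ha, if_true,
          if_false, and_false, false_and, and_true, not_true, not_false_iff]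
        rw [habs]
        first
        | (have : 2 * w e.val.1 e.val.2 ^ ((1 : ℝ) / p) * (0 + 0) -
              w e.val.1 e.val.2 ^ ((1 : ℝ) / p) = -(w e.val.1 e.val.2 ^ ((1 : ℝ) / p)) := by
             ring
           rw [this, hp.neg_pow, hcpow ha]; simp [h1, h2]; try ring)
        | (have : 2 * α * (0 + 0) - α = -α := by ring
           rw [this, hp.neg_pow]; simp [h1, h2]; try ring)
  have key : (∑ r, |halfCliqueOut n G w p α β z r| ^ p) =
      ((3 : ℝ) ^ p - 1) * (∑ e : {e : Fin n × Fin n // e.1 < e.2},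
          if G.Adj e.val.1 e.val.2 ∧ e.val.1 ∈ S ∧ e.val.2 ∈ S
            then w e.val.1 e.val.2 else 0) +
        α ^ p * Z +
        (∑ e : {e : Fin n × Fin n // e.1 < e.2},
          if G.Adj e.val.1 e.val.2 then w e.val.1 e.val.2 else 0) := by
    rw [Fintype.sum_sum_type]
    simp only [Finset.univ_unique, Finset.sum_singleton]
    rw [hlast, add_zero]
    rw [Finset.sum_congr rfl (fun e _ => hrow e)]
    rw [Finset.sum_add_distrib, Finset.sum_add_distrib, ← Finset.mul_sum, ← Finset.mul_sum]
    congr 2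
    rw [Finset.sum_boole, hZ]
  refine ⟨key, ?_⟩
  rw [key]
  have h3 : (1 : ℝ) < 3 ^ p := one_lt_pow₀ (by norm_num) hp0.ne'
  have := mul_lt_mul_of_pos_left hM (by linarith : (0:ℝ) < (3:ℝ) ^ p - 1)
  linarith
end

section
/- In the half-clique reduction with parameters α, β chosen so that (3^p + Z - 1)·α^p > δ^p and β^p > δ^p, where δ^p = ∑_{e∈E} w_e + α^p Z + (3^p - 1)M: if z ∈ {0,1}^n satisfies ‖W z + b‖_p^p < δ^p, then the set S = {i : z_i = 1} has size exactly n/2, S is a clique in G, and ∑_{e ⊆ S} w_e < M. -/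
set_option maxHeartbeats 1000000

theorem stmt_13 (n : ℕ) (hn : 2 ∣ n) (G : SimpleGraph (Fin n)) [DecidableRel G.Adj]
    (w : Fin n → Fin n → ℝ) (hw : ∀ i j, G.Adj i j → 0 < w i j)
    (hwsymm : ∀ i j, w i j = w j i)
    (p : ℕ) (hp : Even p) (hp0 : 0 < p) (α β M δ : ℝ) (Z : ℕ)
    (hZ : Z = (Finset.univ.filter
      (fun e : {e : Fin n × Fin n // e.1 < e.2} => ¬ G.Adj e.val.1 e.val.2)).card)
    (hδ : δ ^ p = (∑ e : {e : Fin n × Fin n // e.1 < e.2},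
        if G.Adj e.val.1 e.val.2 then w e.val.1 e.val.2 else 0) +
        α ^ p * Z + ((3 : ℝ) ^ p - 1) * M)
    (hα : ((3 : ℝ) ^ p + Z - 1) * α ^ p > δ ^ p)
    (hβ : β ^ p > δ ^ p)
    (z : Fin n → ℝ) (hz : ∀ i, z i = 0 ∨ z i = 1)
    (h : (∑ r, |halfCliqueOut n G w p α β z r| ^ p) < δ ^ p) :
    let S : Finset (Fin n) := Finset.univ.filter (fun i => z i = 1)
    S.card = n / 2 ∧ (∀ i ∈ S, ∀ j ∈ S, i ≠ j → G.Adj i j) ∧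
      (∑ e : {e : Fin n × Fin n // e.1 < e.2},
        if G.Adj e.val.1 e.val.2 ∧ e.val.1 ∈ S ∧ e.val.2 ∈ S
          then w e.val.1 e.val.2 else 0) < M := by
  classical
  intro S
  have hp2 : p ≠ 0 := hp0.ne'
  have h3p : (1:ℝ) < 3 ^ p := one_lt_pow₀ (by norm_num) hp2
  -- per-edge identity
  have key : ∀ e : {e : Fin n × Fin n // e.1 < e.2},
      |halfCliqueOut n G w p α β z (Sum.inl e)| ^ p =
      (if G.Adj e.val.1 e.val.2 then w e.val.1 e.val.2 else α ^ p) *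
      (if z e.val.1 = 1 ∧ z e.val.2 = 1 then (3:ℝ) ^ p else 1) := by
    intro e
    simp only [halfCliqueOut, Sum.elim_inl]
    set c := (if G.Adj e.val.1 e.val.2 then w e.val.1 e.val.2 ^ ((1:ℝ)/p) else α) with hcdef
    have hc : c ^ p = (if G.Adj e.val.1 e.val.2 then w e.val.1 e.val.2 else α ^ p) := by
      rw [hcdef]
      split
      · next hadj =>
        rw [← Real.rpow_natCast (w e.val.1 e.val.2 ^ ((1:ℝ)/(p:ℝ))) p,
          ← Real.rpow_mul (hw _ _ hadj).le, one_div,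
          inv_mul_cancel₀ (by exact_mod_cast hp2), Real.rpow_one]
      · rfl
    rcases hz e.val.1 with h1 | h1 <;> rcases hz e.val.2 with h2 | h2
    · have e1 : 2 * c * (z e.val.1 + z e.val.2) - c = -c := by rw [h1, h2]; ring
      rw [e1, abs_neg, hp.pow_abs, hc,
        if_neg (show ¬(z e.val.1 = 1 ∧ z e.val.2 = 1) by simp [h1]), mul_one]
    · have e1 : 2 * c * (z e.val.1 + z e.val.2) - c = c := by rw [h1, h2]; ring
      rw [e1, hp.pow_abs, hc,
        if_neg (show ¬(z e.val.1 = 1 ∧ z e.val.2 = 1) by simp [h1]), mul_one]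
    · have e1 : 2 * c * (z e.val.1 + z e.val.2) - c = c := by rw [h1, h2]; ring
      rw [e1, hp.pow_abs, hc,
        if_neg (show ¬(z e.val.1 = 1 ∧ z e.val.2 = 1) by simp [h2]), mul_one]
    · have e1 : 2 * c * (z e.val.1 + z e.val.2) - c = 3 * c := by rw [h1, h2]; ring
      rw [e1, abs_mul, mul_pow, hp.pow_abs, hp.pow_abs, hc,
        if_pos (show z e.val.1 = 1 ∧ z e.val.2 = 1 from ⟨h1, h2⟩)]
      ring
  -- split the total sum
  have hsplit : (∑ r, |halfCliqueOut n G w p α β z r| ^ p) =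
      (∑ e : {e : Fin n × Fin n // e.1 < e.2},
        (if G.Adj e.val.1 e.val.2 then w e.val.1 e.val.2 else α ^ p) *
        (if z e.val.1 = 1 ∧ z e.val.2 = 1 then (3:ℝ) ^ p else 1)) +
      |β * (∑ i, z i) - ((n / 2 : ℕ) : ℝ) * β| ^ p := by
    rw [Fintype.sum_sum_type]
    congr 1
    · exact Finset.sum_congr rfl fun e _ => key e
    · simp [halfCliqueOut]
  rw [hsplit] at h
  -- nonnegativity facts
  have hCpos : ∀ e : {e : Fin n × Fin n // e.1 < e.2},
      (0:ℝ) ≤ (if G.Adj e.val.1 e.val.2 then w e.val.1 e.val.2 else α ^ p) := by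
    intro e; split
    · next hadj => exact (hw _ _ hadj).le
    · exact hp.pow_nonneg α
  have hD1 : ∀ e : {e : Fin n × Fin n // e.1 < e.2},
      (1:ℝ) ≤ (if z e.val.1 = 1 ∧ z e.val.2 = 1 then (3:ℝ) ^ p else 1) := by
    intro e; split
    · exact h3p.le
    · exact le_rfl
  have hCDge : ∀ e : {e : Fin n × Fin n // e.1 < e.2},
      (if G.Adj e.val.1 e.val.2 then w e.val.1 e.val.2 else α ^ p) ≤
      (if G.Adj e.val.1 e.val.2 then w e.val.1 e.val.2 else α ^ p) *
      (if z e.val.1 = 1 ∧ z e.val.2 = 1 then (3:ℝ) ^ p else 1) :=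
    fun e => le_mul_of_one_le_right (hCpos e) (hD1 e)
  have hUnn : (0:ℝ) ≤ |β * (∑ i, z i) - ((n / 2 : ℕ) : ℝ) * β| ^ p := by positivity
  -- sum of C
  have hsumC : (∑ e : {e : Fin n × Fin n // e.1 < e.2},
      (if G.Adj e.val.1 e.val.2 then w e.val.1 e.val.2 else α ^ p)) =
      (∑ e : {e : Fin n × Fin n // e.1 < e.2},
        if G.Adj e.val.1 e.val.2 then w e.val.1 e.val.2 else 0) + α ^ p * Z := by
    have : ∀ e : {e : Fin n × Fin n // e.1 < e.2},
        (if G.Adj e.val.1 e.val.2 then w e.val.1 e.val.2 else α ^ p) =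
        (if G.Adj e.val.1 e.val.2 then w e.val.1 e.val.2 else 0) +
        (if ¬ G.Adj e.val.1 e.val.2 then α ^ p else 0) := by
      intro e; by_cases hadj : G.Adj e.val.1 e.val.2 <;> simp [hadj]
    rw [Finset.sum_congr rfl fun e _ => this e, Finset.sum_add_distrib]
    congr 1
    rw [← Finset.sum_filter, Finset.sum_const, hZ, nsmul_eq_mul, mul_comm]
  have hSWnn : (0:ℝ) ≤ (∑ e : {e : Fin n × Fin n // e.1 < e.2},
      if G.Adj e.val.1 e.val.2 then w e.val.1 e.val.2 else 0) := by
    apply Finset.sum_nonneg; intro e _; split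
    · next hadj => exact (hw _ _ hadj).le
    · exact le_rfl
  have hsumlb : (∑ e : {e : Fin n × Fin n // e.1 < e.2},
      (if G.Adj e.val.1 e.val.2 then w e.val.1 e.val.2 else α ^ p)) ≤
      (∑ e : {e : Fin n × Fin n // e.1 < e.2},
        (if G.Adj e.val.1 e.val.2 then w e.val.1 e.val.2 else α ^ p) *
        (if z e.val.1 = 1 ∧ z e.val.2 = 1 then (3:ℝ) ^ p else 1)) :=
    Finset.sum_le_sum fun e _ => hCDge e
  have hsumnn : (0:ℝ) ≤ (∑ e : {e : Fin n × Fin n // e.1 < e.2},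
      (if G.Adj e.val.1 e.val.2 then w e.val.1 e.val.2 else α ^ p) *
      (if z e.val.1 = 1 ∧ z e.val.2 = 1 then (3:ℝ) ^ p else 1)) :=
    Finset.sum_nonneg fun e _ => le_trans (hCpos e) (hCDge e)
  -- z sum equals card
  have hzsum : (∑ i, z i) = (S.card : ℝ) := by
    rw [show ((S.card : ℝ)) = ∑ i ∈ S, (1:ℝ) by
      rw [Finset.sum_const, nsmul_eq_mul, mul_one], Finset.sum_filter]
    refine Finset.sum_congr rfl fun i _ => ?_
    rcases hz i with h0 | h0 <;> simp [h0]
  -- Claim 1: cardinality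
  have hcard : S.card = n / 2 := by
    by_contra hne
    have hd : (1:ℝ) ≤ |(S.card : ℝ) - ((n / 2 : ℕ) : ℝ)| := by
      have hZne : ((S.card : ℤ) - ((n / 2 : ℕ) : ℤ)) ≠ 0 := by
        intro hc; apply hne; omega
      have h1 := Int.one_le_abs hZne
      calc (1:ℝ) = ((1:ℤ):ℝ) := by norm_num
        _ ≤ ((|(S.card:ℤ) - ((n/2:ℕ):ℤ)| : ℤ) : ℝ) := by exact_mod_cast h1
        _ = |(S.card:ℝ) - ((n/2:ℕ):ℝ)| := by rw [Int.cast_abs, Int.cast_sub, Int.cast_natCast, Int.cast_natCast]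
    have hU : β ^ p ≤ |β * (∑ i, z i) - ((n / 2 : ℕ) : ℝ) * β| ^ p := by
      rw [hzsum]
      have e1 : β * (S.card : ℝ) - ((n / 2 : ℕ) : ℝ) * β =
          β * ((S.card : ℝ) - ((n / 2 : ℕ) : ℝ)) := by ring
      rw [e1, abs_mul, mul_pow, ← hp.pow_abs β]
      nth_rewrite 1 [← mul_one (|β| ^ p)]
      exact mul_le_mul_of_nonneg_left (one_le_pow₀ hd) (by positivity)
    linarith
  refine ⟨hcard, ?_, ?_⟩
  -- Claim 2: clique
  · have main : ∀ a b : Fin n, a < b → z a = 1 → z b = 1 → G.Adj a b := by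
      intro a b hab ha hb
      by_contra hnadj
      set e0 : {e : Fin n × Fin n // e.1 < e.2} := ⟨(a, b), hab⟩ with he0
      have hpoint : ∀ e : {e : Fin n × Fin n // e.1 < e.2},
          (if G.Adj e.val.1 e.val.2 then w e.val.1 e.val.2 else α ^ p) +
            (if e = e0 then α ^ p * ((3:ℝ) ^ p - 1) else 0) ≤
          (if G.Adj e.val.1 e.val.2 then w e.val.1 e.val.2 else α ^ p) *
            (if z e.val.1 = 1 ∧ z e.val.2 = 1 then (3:ℝ) ^ p else 1) := by
        intro e
        by_cases he : e = e0
        · rw [if_pos he, he]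
          have hC0 : (if G.Adj e0.val.1 e0.val.2 then w e0.val.1 e0.val.2 else α ^ p)
              = α ^ p := if_neg hnadj
          have hD0 : (if z e0.val.1 = 1 ∧ z e0.val.2 = 1 then (3:ℝ) ^ p else 1)
              = (3:ℝ) ^ p := if_pos ⟨ha, hb⟩
          rw [hC0, hD0]; apply le_of_eq; ring
        · rw [if_neg he, add_zero]; exact hCDge e
      have hge := Finset.sum_le_sum fun e (_ : e ∈ Finset.univ) => hpoint e
      rw [Finset.sum_add_distrib, Finset.sum_ite_eq' Finset.univ e0
        (fun _ => α ^ p * ((3:ℝ) ^ p - 1)), if_pos (Finset.mem_univ e0), hsumC] at hge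
      linarith [hge, h, hα, hSWnn, hUnn]
    intro i hi j hj hij
    have hzi : z i = 1 := (Finset.mem_filter.mp hi).2
    have hzj : z j = 1 := (Finset.mem_filter.mp hj).2
    rcases lt_or_gt_of_ne hij with hlt | hgt
    · exact main i j hlt hzi hzj
    · exact (main j i hgt hzj hzi).symm
  -- Claim 3: weight bound
  · have hpoint : ∀ e : {e : Fin n × Fin n // e.1 < e.2},
        (if G.Adj e.val.1 e.val.2 then w e.val.1 e.val.2 else α ^ p) +
          ((3:ℝ) ^ p - 1) *
          (if G.Adj e.val.1 e.val.2 ∧ z e.val.1 = 1 ∧ z e.val.2 = 1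
            then w e.val.1 e.val.2 else 0) ≤
        (if G.Adj e.val.1 e.val.2 then w e.val.1 e.val.2 else α ^ p) *
          (if z e.val.1 = 1 ∧ z e.val.2 = 1 then (3:ℝ) ^ p else 1) := by
      intro e
      by_cases he : G.Adj e.val.1 e.val.2 ∧ z e.val.1 = 1 ∧ z e.val.2 = 1
      · rw [if_pos he, if_pos he.1, if_pos he.2]
        apply le_of_eq; ring
      · rw [if_neg he, mul_zero, add_zero]; exact hCDge e
    have hge := Finset.sum_le_sum fun e (_ : e ∈ Finset.univ) => hpoint e
    rw [Finset.sum_add_distrib, ← Finset.mul_sum, hsumC] at hge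
    have hgoalrw : (∑ e : {e : Fin n × Fin n // e.1 < e.2},
        if G.Adj e.val.1 e.val.2 ∧ e.val.1 ∈ S ∧ e.val.2 ∈ S
          then w e.val.1 e.val.2 else 0) =
        (∑ e : {e : Fin n × Fin n // e.1 < e.2},
        if G.Adj e.val.1 e.val.2 ∧ z e.val.1 = 1 ∧ z e.val.2 = 1
          then w e.val.1 e.val.2 else 0) := by
      refine Finset.sum_congr rfl fun e _ => ?_
      simp [S, Finset.mem_filter]
    rw [hgoalrw]
    have h31 : (0:ℝ) < (3:ℝ) ^ p - 1 := by linarith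
    nlinarith [hge, h, hδ, hUnn, h31]
end
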